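/- arXiv:2602.18134 — 2 statements merged into one kernel-verified Lean document; each statement's English description precedes it below -/
import Mathlib

section
/- Let A ∈ ℝ^{m×n}, let u, γ_h, p₁ be positive reals with 0 < γ_h < u, let Ṽ ∈ ℝ^{n×n} satisfy ‖ṼᵀṼ − I‖₂ ≤ p₁u < 1, set Ã = AṼ, and let ΔÃ ∈ ℝ^{m×n} satisfy |ΔÃ_{ij}| ≤ u|Ã_{ij}| + 2γ_h(|A||Ṽ|)_{ij} for all i, j. Then ‖ΔÃ‖_F ≤ 6nu‖A‖₂. -/
open scoped BigOperators
open Matrix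

/-- Euclidean norm of a vector in `ℝ^m`. -/
noncomputable def vecNorm {m : ℕ} (v : Fin m → ℝ) : ℝ :=
  Real.sqrt (∑ i, v i ^ 2)

/-- The `k`-th largest singular value of a real `m × n` matrix
(`k = 0` gives the largest). -/
noncomputable def sval {m n : ℕ} (A : Matrix (Fin m) (Fin n) ℝ) (k : Fin n) : ℝ :=
  Real.sqrt
    (((Matrix.isHermitian_conjTranspose_mul_self A).eigenvalues ∘
      Tuple.sort (Matrix.isHermitian_conjTranspose_mul_self A).eigenvalues) k.rev)

/-- Spectral norm: the largest singular value. -/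
noncomputable def specNorm {m n : ℕ} (A : Matrix (Fin m) (Fin n) ℝ) : ℝ :=
  ⨆ k, sval A k

/-- Smallest singular value. -/
noncomputable def sMin {m n : ℕ} (A : Matrix (Fin m) (Fin n) ℝ) : ℝ :=
  ⨅ k, sval A k

/-- Frobenius norm. -/
noncomputable def frobNorm {m n : ℕ} (A : Matrix (Fin m) (Fin n) ℝ) : ℝ :=
  Real.sqrt (∑ i, ∑ j, (A i j) ^ 2)

/-- Frobenius norm of the off-diagonal part of a square matrix. -/
noncomputable def offF {n : ℕ} (M : Matrix (Fin n) (Fin n) ℝ) : ℝ :=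
  frobNorm (M - Matrix.diagonal (fun i => M i i))

/-- Diagonal matrix of inverse column norms `D(A)`. -/
noncomputable def colScale {m n : ℕ} (A : Matrix (Fin m) (Fin n) ℝ) :
    Matrix (Fin n) (Fin n) ℝ :=
  Matrix.diagonal (fun j => (vecNorm (fun i => A i j))⁻¹)

/-- Condition number `κ₂(A) = σ_max(A) / σ_min(A)`. -/
noncomputable def kappa2 {m n : ℕ} (A : Matrix (Fin m) (Fin n) ℝ) : ℝ :=
  specNorm A / sMin A

/-- One-sided scaled condition number `κ₂ᴰ(A) = κ₂(A · D(A))`. -/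
noncomputable def scaledCond {m n : ℕ} (A : Matrix (Fin m) (Fin n) ℝ) : ℝ :=
  kappa2 (A * colScale A)

/-- Entrywise absolute value of a matrix. -/
def matAbs {m n : ℕ} (A : Matrix (Fin m) (Fin n) ℝ) : Matrix (Fin m) (Fin n) ℝ :=
  fun i j => |A i j|

section Aux
variable {m n : ℕ}

lemma eig_nonneg (A : Matrix (Fin m) (Fin n) ℝ) (i : Fin n) :
    0 ≤ (Matrix.isHermitian_conjTranspose_mul_self A).eigenvalues i := by
  have h : (Aᴴ * A).PosSemidef := by
    simpa [Matrix.conjTranspose_eq_transpose_of_trivial] using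
      Matrix.posSemidef_conjTranspose_mul_self A
  exact h.eigenvalues_nonneg i

lemma sval_nonneg (A : Matrix (Fin m) (Fin n) ℝ) (k : Fin n) : 0 ≤ sval A k :=
  Real.sqrt_nonneg _

lemma specNorm_nonneg (A : Matrix (Fin m) (Fin n) ℝ) : 0 ≤ specNorm A :=
  Real.iSup_nonneg (fun k => sval_nonneg A k)

lemma sval_le_specNorm (A : Matrix (Fin m) (Fin n) ℝ) (k : Fin n) :
    sval A k ≤ specNorm A :=
  le_ciSup (Set.Finite.bddAbove (Set.finite_range _)) k

lemma sval_sq (A : Matrix (Fin m) (Fin n) ℝ) (k : Fin n) :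
    sval A k ^ 2 = ((Matrix.isHermitian_conjTranspose_mul_self A).eigenvalues ∘
      Tuple.sort (Matrix.isHermitian_conjTranspose_mul_self A).eigenvalues) k.rev :=
  Real.sq_sqrt (eig_nonneg A _)

lemma eig_le_specNorm_sq (A : Matrix (Fin m) (Fin n) ℝ) (j : Fin n) :
    (Matrix.isHermitian_conjTranspose_mul_self A).eigenvalues j ≤ specNorm A ^ 2 := by
  set σ := Tuple.sort (Matrix.isHermitian_conjTranspose_mul_self A).eigenvalues
  have h := sval_sq A ((σ.symm j).rev)
  rw [Fin.rev_rev] at h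
  simp only [σ, Function.comp_apply, Equiv.apply_symm_apply] at h
  rw [← h]
  exact pow_le_pow_left₀ (sval_nonneg A _) (sval_le_specNorm A _) 2

lemma trace_eq_sum_eig {k : ℕ} (B : Matrix (Fin k) (Fin k) ℝ) (hB : B.IsHermitian) :
    B.trace = ∑ i, hB.eigenvalues i := by
  simpa using hB.trace_eq_sum_eigenvalues

lemma sum_sq_eq_sum_eig (A : Matrix (Fin m) (Fin n) ℝ) :
    ∑ i, ∑ j, A i j ^ 2 = ∑ k, (Matrix.isHermitian_conjTranspose_mul_self A).eigenvalues k := by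
  rw [← trace_eq_sum_eig (Aᴴ * A) (Matrix.isHermitian_conjTranspose_mul_self A)]
  simp only [Matrix.trace, Matrix.diag, Matrix.mul_apply, Matrix.conjTranspose_apply, star_trivial, sq]
  rw [Finset.sum_comm]

lemma sum_sq_le (A : Matrix (Fin m) (Fin n) ℝ) :
    ∑ i, ∑ j, A i j ^ 2 ≤ n * specNorm A ^ 2 := by
  rw [sum_sq_eq_sum_eig]
  calc ∑ k, (Matrix.isHermitian_conjTranspose_mul_self A).eigenvalues k
      ≤ ∑ _k : Fin n, specNorm A ^ 2 :=
        Finset.sum_le_sum (fun k _ => eig_le_specNorm_sq A k)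
    _ = n * specNorm A ^ 2 := by simp [mul_comm]

end Aux

/-- Normwise bound on the perturbation of the preconditioned matrix:
`‖ΔÃ‖_F ≤ 6nu‖A‖₂`. -/


theorem perturbation_frobenius_bound
    {m n : ℕ} (A : Matrix (Fin m) (Fin n) ℝ)
    (u γh p₁ : ℝ) (hu : 0 < u) (hγh : 0 < γh) (hp₁ : 0 < p₁) (hγhu : γh < u)
    (V : Matrix (Fin n) (Fin n) ℝ)
    (hV : specNorm (Vᵀ * V - 1) ≤ p₁ * u) (hp₁u : p₁ * u < 1)
    (ΔA : Matrix (Fin m) (Fin n) ℝ)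
    (hΔ : ∀ i j, |ΔA i j| ≤ u * |(A * V) i j| + 2 * γh * ((matAbs A * matAbs V) i j)) :
    frobNorm ΔA ≤ 6 * n * u * specNorm A := by
  classical
  set C : Matrix (Fin m) (Fin n) ℝ := matAbs A * matAbs V with hC
  have hCnn : ∀ i j, 0 ≤ C i j := by
    intro i j
    rw [hC, Matrix.mul_apply]
    exact Finset.sum_nonneg fun k _ => mul_nonneg (abs_nonneg _) (abs_nonneg _)
  have habs : ∀ i j, |(A * V) i j| ≤ C i j := by
    intro i j
    calc |(A * V) i j| = |∑ k, A i k * V k j| := by rw [Matrix.mul_apply]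
      _ ≤ ∑ k, |A i k * V k j| := Finset.abs_sum_le_sum_abs _ _
      _ = C i j := by simp [hC, matAbs, Matrix.mul_apply, abs_mul]
  have hΔ3 : ∀ i j, |ΔA i j| ≤ 3 * u * C i j := by
    intro i j
    have h1 := hΔ i j
    have h2 := mul_nonneg hu.le (sub_nonneg.2 (habs i j))
    have h3 := mul_nonneg (sub_nonneg.2 hγhu.le) (hCnn i j)
    nlinarith
  have hCS : ∀ i j, C i j ^ 2 ≤ (∑ k, A i k ^ 2) * (∑ k, V k j ^ 2) := by
    intro i j
    have h := Finset.sum_mul_sq_le_sq_mul_sq Finset.univ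
      (fun k => |A i k|) (fun k => |V k j|)
    simpa [hC, matAbs, Matrix.mul_apply, sq_abs] using h
  -- bound on the Frobenius square of V
  set E : Matrix (Fin n) (Fin n) ℝ := Vᵀ * V - 1 with hEdef
  have hdiagsum : ∑ j : Fin n, E j j ≤ n * specNorm E := by
    have hEfrob : ∑ i, ∑ j, E i j ^ 2 ≤ n * specNorm E ^ 2 := sum_sq_le E
    have hdiag_le : ∑ j : Fin n, E j j ^ 2 ≤ ∑ i, ∑ j, E i j ^ 2 :=
      Finset.sum_le_sum (fun i _ =>
        Finset.single_le_sum (f := fun j => E i j ^ 2)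
          (fun j _ => sq_nonneg _) (Finset.mem_univ i))
    have hcheb : (∑ j : Fin n, |E j j|) ^ 2 ≤ n * ∑ j : Fin n, |E j j| ^ 2 := by
      simpa using sq_sum_le_card_mul_sum_sq (s := (Finset.univ : Finset (Fin n)))
        (f := fun j => |E j j|)
    have hsq : (∑ j : Fin n, |E j j|) ^ 2 ≤ ((n : ℝ) * specNorm E) ^ 2 := by
      calc (∑ j : Fin n, |E j j|) ^ 2 ≤ n * ∑ j : Fin n, |E j j| ^ 2 := hcheb
        _ = n * ∑ j : Fin n, E j j ^ 2 := by simp [sq_abs]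
        _ ≤ n * ∑ i, ∑ j, E i j ^ 2 := by
            exact mul_le_mul_of_nonneg_left hdiag_le (Nat.cast_nonneg n)
        _ ≤ n * (n * specNorm E ^ 2) := by
            exact mul_le_mul_of_nonneg_left hEfrob (Nat.cast_nonneg n)
        _ = ((n : ℝ) * specNorm E) ^ 2 := by ring
    have habssum : ∑ j : Fin n, |E j j| ≤ (n : ℝ) * specNorm E := by
      have h := Real.sqrt_le_sqrt hsq
      rwa [Real.sqrt_sq (Finset.sum_nonneg fun j _ => abs_nonneg _),
        Real.sqrt_sq (mul_nonneg (Nat.cast_nonneg n) (specNorm_nonneg E))] at h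
    exact le_trans (Finset.sum_le_sum fun j _ => le_abs_self _) habssum
  have hSV : ∑ k, ∑ j, V k j ^ 2 ≤ 2 * n := by
    have h1 : ∑ k : Fin n, ∑ j : Fin n, V k j ^ 2 = ∑ j : Fin n, (E j j + 1) := by
      rw [Finset.sum_comm]
      refine Finset.sum_congr rfl fun j _ => ?_
      simp [hEdef, Matrix.sub_apply, Matrix.one_apply, Matrix.mul_apply,
        Matrix.transpose_apply, sq]
    rw [h1, Finset.sum_add_distrib]
    have h2 : (n : ℝ) * specNorm E ≤ (n : ℝ) * 1 :=
      mul_le_mul_of_nonneg_left (hV.trans hp₁u.le) (Nat.cast_nonneg n)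
    simp only [Finset.sum_const, Finset.card_univ, Fintype.card_fin, nsmul_eq_mul, mul_one]
    linarith [hdiagsum]
  have hSA : ∑ i, ∑ k, A i k ^ 2 ≤ n * specNorm A ^ 2 := sum_sq_le A
  -- putting everything together
  have hsum : ∑ i, ∑ j, ΔA i j ^ 2 ≤
      9 * u ^ 2 * ((∑ i, ∑ k, A i k ^ 2) * (∑ k, ∑ j, V k j ^ 2)) := by
    calc ∑ i, ∑ j, ΔA i j ^ 2
        ≤ ∑ i, ∑ j, 9 * u ^ 2 * C i j ^ 2 := by
          refine Finset.sum_le_sum fun i _ => Finset.sum_le_sum fun j _ => ?_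
          have h1 : ΔA i j ^ 2 ≤ (3 * u * C i j) ^ 2 := by
            rw [← sq_abs (ΔA i j)]
            exact pow_le_pow_left₀ (abs_nonneg _) (hΔ3 i j) 2
          calc ΔA i j ^ 2 ≤ (3 * u * C i j) ^ 2 := h1
            _ = 9 * u ^ 2 * C i j ^ 2 := by ring
      _ = 9 * u ^ 2 * ∑ i, ∑ j, C i j ^ 2 := by
          simp [Finset.mul_sum]
      _ ≤ 9 * u ^ 2 * ((∑ i, ∑ k, A i k ^ 2) * (∑ k, ∑ j, V k j ^ 2)) := by
          refine mul_le_mul_of_nonneg_left ?_ (by positivity)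
          calc ∑ i, ∑ j, C i j ^ 2
              ≤ ∑ i, ∑ j, (∑ k, A i k ^ 2) * (∑ k, V k j ^ 2) :=
                Finset.sum_le_sum fun i _ => Finset.sum_le_sum fun j _ => hCS i j
            _ = (∑ i, ∑ k, A i k ^ 2) * (∑ j, ∑ k, V k j ^ 2) := by
                rw [Finset.sum_mul]
                refine Finset.sum_congr rfl fun i _ => ?_
                rw [Finset.mul_sum]
            _ = (∑ i, ∑ k, A i k ^ 2) * (∑ k, ∑ j, V k j ^ 2) := by
                congr 1
                exact Finset.sum_comm ..
  have hfinal : ∑ i, ∑ j, ΔA i j ^ 2 ≤ (6 * n * u * specNorm A) ^ 2 := by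
    have hSAnn : 0 ≤ ∑ i, ∑ k, A i k ^ 2 :=
      Finset.sum_nonneg fun i _ => Finset.sum_nonneg fun k _ => sq_nonneg _
    have hSVnn : 0 ≤ ∑ k, ∑ j, V k j ^ 2 :=
      Finset.sum_nonneg fun k _ => Finset.sum_nonneg fun j _ => sq_nonneg _
    have ht : (∑ i, ∑ k, A i k ^ 2) * (∑ k, ∑ j, V k j ^ 2) ≤
        (n * specNorm A ^ 2) * (2 * n) :=
      mul_le_mul hSA hSV hSVnn (by positivity)
    have h9 : (0:ℝ) ≤ 9 * u ^ 2 := by positivity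
    have := mul_le_mul_of_nonneg_left ht h9
    nlinarith [sq_nonneg ((n:ℝ) * u * specNorm A), hsum]
  have h := Real.sqrt_le_sqrt hfinal
  rwa [Real.sqrt_sq (by
    have := specNorm_nonneg A
    positivity)] at h
end

section
/- Let m ≥ n and let Ã ∈ ℝ^{m×n} have full rank n with columns ã_j. If off(ÃᵀÃ)/min_j ‖ã_j‖₂² ≤ θ for some θ < 1, then κ₂ᴰ(Ã) ≤ (1 + θ)^{1/2}/(1 − θ)^{1/2}. -/
open scoped BigOperators
open Matrix

lemma frobNorm_nonneg {m n : ℕ} (A : Matrix (Fin m) (Fin n) ℝ) : 0 ≤ frobNorm A :=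
  Real.sqrt_nonneg _

lemma quad_bound {n : ℕ} (E : Matrix (Fin n) (Fin n) ℝ) (v : Fin n → ℝ)
    (hv : ∑ i, v i ^ 2 = 1) :
    |∑ i, ∑ j, v i * E i j * v j| ≤ frobNorm E := by
  have h1 : |∑ i, ∑ j, v i * E i j * v j| ≤ ∑ i, ∑ j, |v i * v j| * |E i j| := by
    refine (Finset.abs_sum_le_sum_abs _ _).trans (Finset.sum_le_sum fun i _ => ?_)
    refine (Finset.abs_sum_le_sum_abs _ _).trans (Finset.sum_le_sum fun j _ => ?_)
    rw [abs_mul, abs_mul, abs_mul]; ring_nf; rfl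
  refine h1.trans ?_
  set S := ∑ i, ∑ j, |v i * v j| * |E i j| with hS
  have hSprod : S = ∑ p : Fin n × Fin n, |v p.1 * v p.2| * |E p.1 p.2| := by
    rw [Fintype.sum_prod_type]
  have key : S ^ 2 ≤ (∑ p : Fin n × Fin n, (v p.1 * v p.2) ^ 2) *
      (∑ p : Fin n × Fin n, (E p.1 p.2) ^ 2) := by
    rw [hSprod]
    have := Finset.sum_mul_sq_le_sq_mul_sq Finset.univ
      (fun p : Fin n × Fin n => |v p.1 * v p.2|) (fun p => |E p.1 p.2|)
    simpa [sq_abs, abs_mul, mul_pow] using this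
  have h2 : (∑ p : Fin n × Fin n, (v p.1 * v p.2) ^ 2) = 1 := by
    rw [Fintype.sum_prod_type]
    simp_rw [mul_pow, ← Finset.mul_sum, ← Finset.sum_mul, hv]
    simp
  have h3 : (∑ p : Fin n × Fin n, (E p.1 p.2) ^ 2) = ∑ i, ∑ j, (E i j) ^ 2 := by
    rw [Fintype.sum_prod_type]
  rw [h2, one_mul, h3] at key
  have hSnn : 0 ≤ S := Finset.sum_nonneg fun i _ => Finset.sum_nonneg fun j _ =>
    mul_nonneg (abs_nonneg _) (abs_nonneg _)
  calc S = Real.sqrt (S ^ 2) := by rw [Real.sqrt_sq hSnn]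
    _ ≤ frobNorm E := Real.sqrt_le_sqrt key

lemma eig_bound {n : ℕ} {M : Matrix (Fin n) (Fin n) ℝ} (hM : M.IsHermitian)
    (hdiag : ∀ i, M i i = 1) (k : Fin n) :
    |hM.eigenvalues k - 1| ≤ offF M := by
  set v : Fin n → ℝ := ⇑(hM.eigenvectorBasis k) with hvdef
  have hnorm : ‖hM.eigenvectorBasis k‖ = 1 := hM.eigenvectorBasis.orthonormal.1 k
  have hv : ∑ i, v i ^ 2 = 1 := by
    have := EuclideanSpace.norm_eq (hM.eigenvectorBasis k)
    rw [hnorm] at this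
    have h2 : Real.sqrt (∑ i, ‖(hM.eigenvectorBasis k) i‖ ^ 2) = 1 := this.symm
    have := Real.sqrt_eq_one.mp h2
    simpa [hvdef, Real.norm_eq_abs, sq_abs] using this
  have hmv : M *ᵥ v = hM.eigenvalues k • v := hM.mulVec_eigenvectorBasis k
  have hquad : ∑ i, v i * (M *ᵥ v) i = hM.eigenvalues k := by
    rw [hmv]
    simp only [Pi.smul_apply, smul_eq_mul]
    calc ∑ i, v i * (hM.eigenvalues k * v i)
        = hM.eigenvalues k * ∑ i, v i ^ 2 := by rw [Finset.mul_sum]; congr 1; ext i; ring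
      _ = hM.eigenvalues k := by rw [hv, mul_one]
  set E : Matrix (Fin n) (Fin n) ℝ := M - Matrix.diagonal (fun i => M i i) with hE
  have hdiagsum : ∀ i, ∑ j, v i * (Matrix.diagonal (fun i => M i i) i j) * v j = v i ^ 2 := by
    intro i
    rw [Finset.sum_eq_single i]
    · rw [Matrix.diagonal_apply_eq, hdiag]; ring
    · intro j _ hj
      rw [Matrix.diagonal_apply_ne _ (Ne.symm hj)]; ring
    · intro h; exact absurd (Finset.mem_univ i) h
  have hsplit : ∑ i, v i * (M *ᵥ v) i = (∑ i, ∑ j, v i * E i j * v j) + 1 := by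
    have hmv_apply : ∀ i, (M *ᵥ v) i = ∑ j, M i j * v j := fun i => rfl
    have step : ∀ i, ∑ j, v i * E i j * v j = (∑ j, v i * (M i j * v j)) - v i ^ 2 := by
      intro i
      rw [← hdiagsum i, ← Finset.sum_sub_distrib]
      refine Finset.sum_congr rfl fun j _ => ?_
      simp only [hE, Matrix.sub_apply]; ring
    simp_rw [hmv_apply, Finset.mul_sum, step, Finset.sum_sub_distrib, hv]
    ring
  have := quad_bound E v hv
  rw [hquad] at hsplit
  have : hM.eigenvalues k - 1 = ∑ i, ∑ j, v i * E i j * v j := by linarith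
  rw [this]
  exact quad_bound E v hv

lemma col_pos {m n : ℕ} (A : Matrix (Fin m) (Fin n) ℝ) (hrank : A.rank = n) (j : Fin n) :
    0 < ∑ i, A i j ^ 2 := by
  have hker : LinearMap.ker A.mulVecLin = ⊥ := by
    have h1 : Module.finrank ℝ (LinearMap.range A.mulVecLin) +
        Module.finrank ℝ (LinearMap.ker A.mulVecLin) = n := by
      have := LinearMap.finrank_range_add_finrank_ker A.mulVecLin
      simpa using this
    have h2 : Module.finrank ℝ (LinearMap.range A.mulVecLin) = n := hrank
    have h3 : Module.finrank ℝ (LinearMap.ker A.mulVecLin) = 0 := by omega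
    exact Submodule.finrank_eq_zero.mp h3
  have hcol : ¬ (∀ i, A i j = 0) := by
    intro hc
    have hmem : (Pi.single j 1 : Fin n → ℝ) ∈ LinearMap.ker A.mulVecLin := by
      rw [LinearMap.mem_ker]
      ext i
      simp [Matrix.mulVecLin_apply, Matrix.mulVec_single, hc i]
    rw [hker, Submodule.mem_bot] at hmem
    have := congrFun hmem j
    simp at this
  push_neg at hcol
  obtain ⟨i, hi⟩ := hcol
  have : 0 < A i j ^ 2 := by positivity
  exact this.trans_le (Finset.single_le_sum (fun i _ => sq_nonneg (A i j)) (Finset.mem_univ i))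

/-- Proposition 3.3 -/
theorem scaled_cond_bound_of_off
    {m n : ℕ} (hmn : n ≤ m)
    (A : Matrix (Fin m) (Fin n) ℝ) (hrank : A.rank = n)
    (θ : ℝ) (hθ1 : θ < 1)
    (hθ : offF (Aᵀ * A) / (⨅ j, (vecNorm (fun i => A i j)) ^ 2) ≤ θ) :
    scaledCond A ≤ Real.sqrt (1 + θ) / Real.sqrt (1 - θ) := by
  rcases Nat.eq_zero_or_pos n with hn | hn
  · subst hn
    have h1 : scaledCond A = 0 := by
      simp [scaledCond, kappa2, specNorm, sMin, Real.iSup_of_isEmpty, Real.iInf_of_isEmpty]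
    rw [h1]
    positivity
  haveI : Nonempty (Fin n) := ⟨⟨0, hn⟩⟩
  -- column norms
  set c : Fin n → ℝ := fun j => vecNorm (fun i => A i j) with hcdef
  have hcsq : ∀ j, c j ^ 2 = ∑ i, A i j ^ 2 := fun j =>
    Real.sq_sqrt (Finset.sum_nonneg fun i _ => sq_nonneg _)
  have hc : ∀ j, 0 < c j := fun j => Real.sqrt_pos.mpr (col_pos A hrank j)
  set c0 : ℝ := ⨅ j, c j ^ 2 with hc0def
  have hc0le : ∀ j, c0 ≤ c j ^ 2 := fun j =>
    ciInf_le (Finite.bddBelow_range _) j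
  have hc0pos : 0 < c0 := by
    obtain ⟨j0, hj0⟩ := Finite.exists_min (fun j => c j ^ 2)
    have h1 : c j0 ^ 2 ≤ c0 := le_ciInf hj0
    exact lt_of_lt_of_le (pow_pos (hc j0) 2) h1
  -- the scaled matrix
  set B : Matrix (Fin m) (Fin n) ℝ := A * colScale A with hBdef
  have hBentry : ∀ i j, B i j = A i j * (c j)⁻¹ := by
    intro i j
    rw [hBdef, colScale, Matrix.mul_diagonal]
  set G : Matrix (Fin n) (Fin n) ℝ := Aᵀ * A with hGdef
  have hGentry : ∀ i j, G i j = ∑ k, A k i * A k j := by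
    intro i j
    rw [hGdef, Matrix.mul_apply]
    simp [Matrix.transpose_apply]
  have hMentry : ∀ i j, (Bᵀ * B) i j = (c i)⁻¹ * (c j)⁻¹ * G i j := by
    intro i j
    rw [Matrix.mul_apply, hGentry]
    rw [Finset.mul_sum]
    refine Finset.sum_congr rfl fun k _ => ?_
    rw [Matrix.transpose_apply, hBentry, hBentry]
    ring
  have hdiag : ∀ j, (Bᵀ * B) j j = 1 := by
    intro j
    rw [hMentry, hGentry]
    have : (∑ k, A k j * A k j) = c j ^ 2 := by
      rw [hcsq]; exact Finset.sum_congr rfl fun k _ => (sq (A k j)).symm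
    rw [this]
    field_simp [(hc j).ne']
  -- bound the off-diagonal Frobenius norm of BᵀB
  have hoff : offF (Bᵀ * B) ≤ θ := by
    have hGnn : 0 ≤ offF G := Real.sqrt_nonneg _
    have hGsq : offF G ^ 2 = ∑ i, ∑ j, ((G - Matrix.diagonal fun i => G i i) i j) ^ 2 :=
      Real.sq_sqrt (Finset.sum_nonneg fun i _ => Finset.sum_nonneg fun j _ => sq_nonneg _)
    have hterm : ∀ i j, (((Bᵀ * B) - Matrix.diagonal fun i => (Bᵀ * B) i i) i j) ^ 2 ≤
        (c0⁻¹) ^ 2 * ((G - Matrix.diagonal fun i => G i i) i j) ^ 2 := by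
      intro i j
      by_cases hij : i = j
      · subst hij
        simp [Matrix.sub_apply, Matrix.diagonal_apply_eq]
      · rw [Matrix.sub_apply, Matrix.diagonal_apply_ne _ hij, sub_zero,
          Matrix.sub_apply, Matrix.diagonal_apply_ne _ hij, sub_zero]
        have hkey : (c i * c j)⁻¹ ≤ c0⁻¹ := by
          apply inv_anti₀ hc0pos
          have h1 : c0 * c0 ≤ c i ^ 2 * c j ^ 2 :=
            mul_le_mul (hc0le i) (hc0le j) hc0pos.le (sq_nonneg _)
          nlinarith [mul_pos (hc i) (hc j)]
        have h2 : ((Bᵀ * B) i j) ^ 2 = ((c i * c j)⁻¹) ^ 2 * (G i j) ^ 2 := by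
          rw [hMentry]
          field_simp
        rw [h2]
        have h3 : ((c i * c j)⁻¹) ^ 2 ≤ (c0⁻¹) ^ 2 := by
          exact pow_le_pow_left₀ (inv_nonneg.mpr (mul_pos (hc i) (hc j)).le) hkey 2
        exact mul_le_mul_of_nonneg_right h3 (sq_nonneg _)
    have hsum : (∑ i, ∑ j, (((Bᵀ * B) - Matrix.diagonal fun i => (Bᵀ * B) i i) i j) ^ 2) ≤
        (c0⁻¹ * offF G) ^ 2 := by
      have : (c0⁻¹ * offF G) ^ 2 = (c0⁻¹) ^ 2 * offF G ^ 2 := by ring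
      rw [this, hGsq, Finset.mul_sum]
      refine Finset.sum_le_sum fun i _ => ?_
      rw [Finset.mul_sum]
      exact Finset.sum_le_sum fun j _ => hterm i j
    have h4 : offF (Bᵀ * B) ≤ c0⁻¹ * offF G := by
      rw [offF, frobNorm]
      calc Real.sqrt (∑ i, ∑ j, (((Bᵀ * B) - Matrix.diagonal fun i => (Bᵀ * B) i i) i j) ^ 2)
          ≤ Real.sqrt ((c0⁻¹ * offF G) ^ 2) := Real.sqrt_le_sqrt hsum
        _ = c0⁻¹ * offF G := Real.sqrt_sq (by positivity)
    refine h4.trans ?_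
    rw [inv_mul_eq_div]
    exact hθ
  -- eigenvalue bounds
  have heig : ∀ k, |(Matrix.isHermitian_conjTranspose_mul_self B).eigenvalues k - 1| ≤ θ :=
    fun k => (eig_bound (Matrix.isHermitian_conjTranspose_mul_self B) hdiag k).trans hoff
  have hup : ∀ k, sval B k ≤ Real.sqrt (1 + θ) := by
    intro k
    rw [sval, Function.comp_apply]
    apply Real.sqrt_le_sqrt
    have := abs_le.mp (heig (Tuple.sort (Matrix.isHermitian_conjTranspose_mul_self B).eigenvalues k.rev))
    linarith [this.2]
  have hlo : ∀ k, Real.sqrt (1 - θ) ≤ sval B k := by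
    intro k
    rw [sval, Function.comp_apply]
    apply Real.sqrt_le_sqrt
    have := abs_le.mp (heig (Tuple.sort (Matrix.isHermitian_conjTranspose_mul_self B).eigenvalues k.rev))
    linarith [this.1]
  have hspec : specNorm B ≤ Real.sqrt (1 + θ) := ciSup_le hup
  have hsmin : Real.sqrt (1 - θ) ≤ sMin B := le_ciInf hlo
  have hpos : 0 < Real.sqrt (1 - θ) := Real.sqrt_pos.mpr (by linarith)
  rw [scaledCond, kappa2]
  exact div_le_div₀ (Real.sqrt_nonneg _) hspec hpos hsmin
end
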